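/- arXiv:1911.03475 — 2 statements merged into one kernel-verified Lean document; each statement's English description precedes it below -/
import Mathlib

section
/- Let $t_0 < t_f$ be real numbers, let $a \in \mathbb{R}$, and define the affine control $u^*(t) = a\,(t - t_f)$ on $[t_0, t_f]$. Let $u : [t_0, t_f] \to \mathbb{R}$ be any continuous control, and let $v, p$ (resp. $v^*, p^*$) denote the speed and position trajectories generated by $u$ (resp. $u^*$) through the double-integrator dynamics from the same initial position $p(t_0) = p^*(t_0)$ and the same initial speed $v(t_0) = v^*(t_0)$. If the two trajectories also reach the same terminal position, $p(t_f) = p^*(t_f)$, then $\int_{t_0}^{t_f} \tfrac{1}{2} u^*(t)^2\, dt \le \int_{t_0}^{t_f} \tfrac{1}{2} u(t)^2\, dt$. That is, a control that is affine in time and vanishes at the terminal time minimizes the transient-energy cost among all controls steering the double integrator between the given boundary conditions with free terminal speed. -/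
open MeasureTheory intervalIntegral Set

/-- Double-integrator energy optimality of the affine control `u*(t) = a*(t - tf)`
vanishing at the terminal time, with free terminal speed: among all continuous
controls `u` on `[t0, tf]` steering the double integrator from the same initial
position and speed to the same terminal position, `u*` minimizes the transient
energy cost `∫ (1/2) u(t)^2 dt`. -/
theorem affine_control_vanishing_at_tf_minimizes_energy
    (t0 tf a : ℝ) (ht : t0 < tf)
    (p0 v0 : ℝ)
    (u : ℝ → ℝ) (hu : ContinuousOn u (Set.Icc t0 tf))
    (v p vstar pstar : ℝ → ℝ)
    (hv : ∀ t, v t = v0 + ∫ s in t0..t, u s)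
    (hp : ∀ t, p t = p0 + ∫ s in t0..t, v s)
    (hvstar : ∀ t, vstar t = v0 + ∫ s in t0..t, a * (s - tf))
    (hpstar : ∀ t, pstar t = p0 + ∫ s in t0..t, vstar s)
    (hterm : p tf = pstar tf) :
    (∫ t in t0..tf, (1 / 2) * (a * (t - tf)) ^ 2) ≤ ∫ t in t0..tf, (1 / 2) * (u t) ^ 2 := by
  -- continuous extension of `u` to all of ℝ
  set g : ℝ → ℝ := Set.IccExtend ht.le ((Set.Icc t0 tf).restrict u) with hgdef
  have hgc : Continuous g := hu.restrict.Icc_extend'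
  have hge : ∀ x ∈ Set.Icc t0 tf, g x = u x := by
    intro x hx
    simp [hgdef, Set.IccExtend_of_mem ht.le _ hx]; rfl
  have huIcc : Set.uIcc t0 tf = Set.Icc t0 tf := Set.uIcc_of_le ht.le
  -- the affine control and the difference
  set f : ℝ → ℝ := fun t => a * (t - tf) with hfdef
  have hfc : Continuous f := by fun_prop
  set w : ℝ → ℝ := fun t => g t - f t with hwdef
  have hwc : Continuous w := hgc.sub hfc
  set W : ℝ → ℝ := fun t => ∫ s in t0..t, w s with hWdef
  have hW0 : W t0 = 0 := integral_same
  have hWd : ∀ x : ℝ, HasDerivAt W (w x) x := fun x =>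
    integral_hasDerivAt_right (hwc.intervalIntegrable t0 x)
      hwc.aestronglyMeasurable.stronglyMeasurableAtFilter hwc.continuousAt
  have hWc : Continuous W := continuous_iff_continuousAt.2 fun x => (hWd x).continuousAt
  -- `v - vstar = W` on `[t0, tf]`
  have hWeq : ∀ t ∈ Set.Icc t0 tf, v t - vstar t = W t := by
    intro t htmem
    have hsub : Set.uIcc t0 t ⊆ Set.Icc t0 tf := by
      rw [Set.uIcc_of_le htmem.1]
      exact Set.Icc_subset_Icc le_rfl htmem.2
    have hug : (∫ s in t0..t, u s) = ∫ s in t0..t, g s :=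
      intervalIntegral.integral_congr fun x hx => (hge x (hsub hx)).symm
    have hsplit : (∫ s in t0..t, w s) = (∫ s in t0..t, g s) - ∫ s in t0..t, f s := by
      rw [← intervalIntegral.integral_sub (hgc.intervalIntegrable t0 t)
        (hfc.intervalIntegrable t0 t)]
    rw [hv, hvstar, hWdef]
    simp only [hsplit, hug, hfdef]
    ring
  -- continuity of `v` and `vstar` needed for integrability
  have hvstarc : Continuous vstar := by
    have : vstar = fun t => v0 + ∫ s in t0..t, f s := funext hvstar
    rw [this]
    exact continuous_const.add (continuous_iff_continuousAt.2 fun x =>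
      (integral_hasDerivAt_right (hfc.intervalIntegrable t0 x)
        hfc.aestronglyMeasurable.stronglyMeasurableAtFilter hfc.continuousAt).continuousAt)
  have hvc : ContinuousOn v (Set.Icc t0 tf) := by
    have hGc : Continuous (fun t => v0 + ∫ s in t0..t, g s) :=
      continuous_const.add (continuous_iff_continuousAt.2 fun x =>
        (integral_hasDerivAt_right (hgc.intervalIntegrable t0 x)
          hgc.aestronglyMeasurable.stronglyMeasurableAtFilter hgc.continuousAt).continuousAt)
    refine hGc.continuousOn.congr fun t htmem => ?_
    have hsub : Set.uIcc t0 t ⊆ Set.Icc t0 tf := by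
      rw [Set.uIcc_of_le htmem.1]
      exact Set.Icc_subset_Icc le_rfl htmem.2
    rw [hv]
    exact congrArg (v0 + ·) (intervalIntegral.integral_congr fun x hx => (hge x (hsub hx)).symm)
  -- the terminal constraint gives `∫ W = 0`
  have hintW : (∫ t in t0..tf, W t) = 0 := by
    have h1 : (∫ t in t0..tf, W t) = ∫ t in t0..tf, (v t - vstar t) :=
      intervalIntegral.integral_congr fun x hx => (hWeq x (huIcc ▸ hx)).symm
    have h2 : (∫ t in t0..tf, (v t - vstar t)) =
        (∫ t in t0..tf, v t) - ∫ t in t0..tf, vstar t :=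
      intervalIntegral.integral_sub ((huIcc ▸ hvc).intervalIntegrable)
        (hvstarc.intervalIntegrable t0 tf)
    have h3 : (∫ t in t0..tf, v t) = ∫ t in t0..tf, vstar t := by
      have := hterm
      rw [hp, hpstar] at this
      linarith
    rw [h1, h2, h3, sub_self]
  -- integration by parts: `∫ f * w = 0`
  have hfd : ∀ x ∈ Set.uIcc t0 tf, HasDerivAt f a x := by
    intro x _
    have : HasDerivAt (fun t : ℝ => a * (t - tf)) (a * 1) x :=
      (((hasDerivAt_id x).sub_const tf)).const_mul a
    simpa using this
  have hparts : (∫ t in t0..tf, f t * w t) = 0 := by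
    have := intervalIntegral.integral_mul_deriv_eq_deriv_mul hfd
      (fun x _ => hWd x) (continuous_const.intervalIntegrable t0 tf)
      (hwc.intervalIntegrable t0 tf)
    have hftf : f tf = 0 := by simp [hfdef]
    have haW : (∫ t in t0..tf, a * W t) = a * ∫ t in t0..tf, W t :=
      intervalIntegral.integral_const_mul a W
    rw [hftf, hW0, haW, hintW] at this
    simpa using this
  -- pointwise energy decomposition and conclusion
  have hcongr : (∫ t in t0..tf, (1 / 2) * (u t) ^ 2) = ∫ t in t0..tf, (1 / 2) * (g t) ^ 2 :=
    intervalIntegral.integral_congr fun x hx => by rw [hge x (huIcc ▸ hx)]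
  have hdecomp : (∫ t in t0..tf, (1 / 2) * (g t) ^ 2) =
      (∫ t in t0..tf, (1 / 2) * (f t) ^ 2) + (∫ t in t0..tf, f t * w t)
        + ∫ t in t0..tf, (1 / 2) * (w t) ^ 2 := by
    rw [← intervalIntegral.integral_add (f := fun t => (1 / 2) * (f t) ^ 2) (g := fun t => f t * w t)
      ((continuous_const.mul (hfc.pow 2)).intervalIntegrable t0 tf)
      ((hfc.mul hwc).intervalIntegrable t0 tf),
      ← intervalIntegral.integral_add (f := fun t => (1 / 2) * (f t) ^ 2 + f t * w t)
      (g := fun t => (1 / 2) * (w t) ^ 2)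
      (((continuous_const.mul (hfc.pow 2)).add (hfc.mul hwc)).intervalIntegrable t0 tf)
      ((continuous_const.mul (hwc.pow 2)).intervalIntegrable t0 tf)]
    refine intervalIntegral.integral_congr fun x _ => ?_
    have : g x = f x + w x := by simp [hwdef]
    rw [this]; ring
  have hnonneg : 0 ≤ ∫ t in t0..tf, (1 / 2) * (w t) ^ 2 :=
    intervalIntegral.integral_nonneg ht.le fun x _ => by positivity
  rw [hcongr, hdecomp, hparts]
  have : (∫ t in t0..tf, (1 / 2) * (a * (t - tf)) ^ 2) = ∫ t in t0..tf, (1 / 2) * (f t) ^ 2 := rfl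
  rw [this]
  linarith
end

section
/- Let $t_0 < t_f$ be real numbers, let $a, b \in \mathbb{R}$, and define the affine control $u^*(t) = a\,t + b$ on $[t_0, t_f]$. Let $u : [t_0, t_f] \to \mathbb{R}$ be any continuous control, and let $v, p$ (resp. $v^*, p^*$) denote the speed and position trajectories generated by $u$ (resp. $u^*$) through the double-integrator dynamics from the same initial position $p(t_0) = p^*(t_0)$ and the same initial speed $v(t_0) = v^*(t_0)$. If the two trajectories also satisfy $p(t_f) = p^*(t_f)$ and $v(t_f) = v^*(t_f)$, then $\int_{t_0}^{t_f} \tfrac{1}{2} u^*(t)^2\, dt \le \int_{t_0}^{t_f} \tfrac{1}{2} u(t)^2\, dt$. That is, when the inequality state and control constraints are inactive, the optimal control for the energy-minimization problem with fixed terminal position and terminal speed is affine in time: $u^*(t) = a\,t + b$. -/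
open MeasureTheory intervalIntegral Set

/-- Double-integrator energy optimality of the affine control `u*(t) = a*t + b`:
among all continuous controls `u` on `[t0, tf]` steering the double integrator
from the same initial position and speed to the same terminal position and
terminal speed, `u*` minimizes the transient energy cost `∫ (1/2) u(t)^2 dt`. -/
theorem affine_control_minimizes_energy
    (t0 tf a b : ℝ) (ht : t0 < tf)
    (p0 v0 : ℝ)
    (u : ℝ → ℝ) (hu : ContinuousOn u (Set.Icc t0 tf))
    (v p vstar pstar : ℝ → ℝ)
    (hv : ∀ t, v t = v0 + ∫ s in t0..t, u s)
    (hp : ∀ t, p t = p0 + ∫ s in t0..t, v s)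
    (hvstar : ∀ t, vstar t = v0 + ∫ s in t0..t, (a * s + b))
    (hpstar : ∀ t, pstar t = p0 + ∫ s in t0..t, vstar s)
    (htermp : p tf = pstar tf)
    (htermv : v tf = vstar tf) :
    (∫ t in t0..tf, (1 / 2) * (a * t + b) ^ 2) ≤ ∫ t in t0..tf, (1 / 2) * (u t) ^ 2 := by
  have hle : t0 ≤ tf := ht.le
  -- continuous extension of u to all of ℝ
  set U : ℝ → ℝ := Set.IccExtend hle ((Set.Icc t0 tf).restrict u) with hUdef
  have hUcont : Continuous U := (ContinuousOn.restrict hu).Icc_extend'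
  have hUeq : ∀ t ∈ Set.Icc t0 tf, U t = u t := fun t htt => by
    simp [hUdef, Set.IccExtend_of_mem hle _ htt]; rfl
  have hsub : ∀ t ∈ Set.Icc t0 tf, Set.uIcc t0 t ⊆ Set.Icc t0 tf := by
    intro t htt
    rw [Set.uIcc_of_le htt.1]
    exact Set.Icc_subset_Icc le_rfl htt.2
  have hIeq : ∀ t ∈ Set.Icc t0 tf, (∫ s in t0..t, U s) = ∫ s in t0..t, u s := by
    intro t htt
    exact intervalIntegral.integral_congr fun s hs => hUeq s (hsub t htt hs)
  -- the affine reference control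
  set c : ℝ → ℝ := fun t => a * t + b with hcdef
  have hccont : Continuous c := by fun_prop
  set w : ℝ → ℝ := fun t => U t - c t with hwdef
  have hwcont : Continuous w := hUcont.sub hccont
  set W : ℝ → ℝ := fun t => ∫ s in t0..t, w s with hWdef
  have hWderiv : ∀ t : ℝ, HasDerivAt W (w t) t := fun t =>
    intervalIntegral.integral_hasDerivAt_right
      (hwcont.intervalIntegrable _ _)
      (hwcont.stronglyMeasurable.stronglyMeasurableAtFilter)
      hwcont.continuousAt
  have hWcont : Continuous W :=
    continuous_iff_continuousAt.2 fun t => (hWderiv t).continuousAt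
  -- W t = v t - vstar t on [t0, tf]
  have hWeq : ∀ t ∈ Set.Icc t0 tf, W t = v t - vstar t := by
    intro t htt
    have h1 : W t = (∫ s in t0..t, U s) - ∫ s in t0..t, c s := by
      rw [hWdef]
      exact intervalIntegral.integral_sub (hUcont.intervalIntegrable _ _)
        (hccont.intervalIntegrable _ _)
    rw [h1, hIeq t htt, hv, hvstar]
    ring
  have hWt0 : W t0 = 0 := by simp [hWdef]
  have hWtf : W tf = 0 := by
    rw [hWeq tf ⟨hle, le_rfl⟩, htermv, sub_self]
  -- ∫ W = 0
  have hvstarcont : Continuous vstar := by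
    have : vstar = fun t => v0 + ∫ s in t0..t, c s := funext fun t => hvstar t
    rw [this]
    exact continuous_const.add (continuous_iff_continuousAt.2 fun t =>
      (intervalIntegral.integral_hasDerivAt_right
        (hccont.intervalIntegrable _ _)
        (hccont.stronglyMeasurable.stronglyMeasurableAtFilter)
        hccont.continuousAt).continuousAt)
  have hintW : (∫ t in t0..tf, W t) = 0 := by
    have h1 : (∫ t in t0..tf, v t) = ∫ t in t0..tf, (vstar t + W t) := by
      apply intervalIntegral.integral_congr
      intro t htt
      rw [Set.uIcc_of_le hle] at htt
      dsimp only
      rw [hWeq t htt]; ring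
    have h2 : (∫ t in t0..tf, (vstar t + W t))
        = (∫ t in t0..tf, vstar t) + ∫ t in t0..tf, W t :=
      intervalIntegral.integral_add (hvstarcont.intervalIntegrable _ _)
        (hWcont.intervalIntegrable _ _)
    have h3 : p tf - pstar tf = ∫ t in t0..tf, W t := by
      rw [hp, hpstar, h1, h2]; ring
    rw [htermp, sub_self] at h3
    exact h3.symm
  -- integration by parts: ∫ t * w t = 0
  have hibp : (∫ t in t0..tf, t * w t) = 0 := by
    have := intervalIntegral.integral_mul_deriv_eq_deriv_mul
      (u := fun t : ℝ => t) (u' := fun _ : ℝ => (1 : ℝ)) (v := W) (v' := w)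
      (a := t0) (b := tf)
      (fun x _ => hasDerivAt_id x) (fun x _ => hWderiv x)
      (intervalIntegrable_const) (hwcont.intervalIntegrable _ _)
    simpa [hWt0, hWtf, hintW] using this
  -- orthogonality: ∫ c t * w t = 0
  have horth : (∫ t in t0..tf, c t * w t) = 0 := by
    have hintw : (∫ t in t0..tf, w t) = 0 := by
      exact hWtf
    have h1 : (∫ t in t0..tf, c t * w t)
        = ∫ t in t0..tf, (a * (t * w t) + b * w t) := by
      apply intervalIntegral.integral_congr
      intro t _
      simp only [hcdef]; ring
    have hi1 : IntervalIntegrable (fun t => a * (t * w t)) volume t0 tf := by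
      apply Continuous.intervalIntegrable; fun_prop
    have hi2 : IntervalIntegrable (fun t => b * w t) volume t0 tf := by
      apply Continuous.intervalIntegrable; fun_prop
    rw [h1, intervalIntegral.integral_add hi1 hi2,
      intervalIntegral.integral_const_mul, intervalIntegral.integral_const_mul,
      hibp, hintw]
    ring
  -- put it together
  have hmain : (∫ t in t0..tf, (1 / 2) * (u t) ^ 2)
      = (∫ t in t0..tf, (1 / 2) * (c t) ^ 2) + ∫ t in t0..tf, (1 / 2) * (w t) ^ 2 := by
    have h1 : (∫ t in t0..tf, (1 / 2) * (u t) ^ 2)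
        = ∫ t in t0..tf, ((1 / 2) * (c t) ^ 2 + (c t * w t + (1 / 2) * (w t) ^ 2)) := by
      apply intervalIntegral.integral_congr
      intro t htt
      rw [Set.uIcc_of_le hle] at htt
      dsimp only
      rw [← hUeq t htt]
      have : U t = c t + w t := by simp [hwdef]
      rw [this]; ring
    rw [h1, intervalIntegral.integral_add (f := fun t => (1 / 2) * (c t) ^ 2)
        (g := fun t => c t * w t + (1 / 2) * (w t) ^ 2)
        ((continuous_const.mul (hccont.pow 2)).intervalIntegrable _ _)
        (((hccont.mul hwcont).add (continuous_const.mul (hwcont.pow 2))).intervalIntegrable _ _),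
      intervalIntegral.integral_add (f := fun t => c t * w t) (g := fun t => (1 / 2) * (w t) ^ 2)
        ((hccont.mul hwcont).intervalIntegrable _ _)
        ((continuous_const.mul (hwcont.pow 2)).intervalIntegrable _ _),
      horth]
    ring
  have hnn : 0 ≤ ∫ t in t0..tf, (1 / 2) * (w t) ^ 2 :=
    intervalIntegral.integral_nonneg hle fun t _ => by positivity
  calc (∫ t in t0..tf, (1 / 2) * (a * t + b) ^ 2)
      = ∫ t in t0..tf, (1 / 2) * (c t) ^ 2 := rfl
    _ ≤ (∫ t in t0..tf, (1 / 2) * (c t) ^ 2) + ∫ t in t0..tf, (1 / 2) * (w t) ^ 2 :=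
        le_add_of_nonneg_right hnn
    _ = ∫ t in t0..tf, (1 / 2) * (u t) ^ 2 := hmain.symm
end
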